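/- Let D ∈ ℝ^{n×n} be symmetric, E ∈ ℝ^{n×n}, C = D·E, let H : ℝⁿ → ℝ and J : ℝⁿ → ℝⁿ satisfy ⟨w₁ − w₂, J(w₁) − J(w₂)⟩ = 0 for all w₁, w₂ ∈ ℝⁿ. Let wᵏ, w̃ᵏ, w̃^{k+1} ∈ ℝⁿ and set w^{k+1} = wᵏ − E(wᵏ − w̃ᵏ). Assume (i) for all w ∈ ℝⁿ: H(w) − H(w̃ᵏ) + ⟨w − w̃ᵏ, J(w̃ᵏ) − C(wᵏ − w̃ᵏ)⟩ ≥ 0, and (ii) for all w ∈ ℝⁿ: H(w) − H(w̃^{k+1}) + ⟨w − w̃^{k+1}, J(w̃^{k+1}) − C(w^{k+1} − w̃^{k+1})⟩ ≥ 0. Then, with a = wᵏ − w̃ᵏ and b = w^{k+1} − w̃^{k+1}, one has aᵀEᵀDE(a − b) ≥ (1/2)·(a − b)ᵀ(Cᵀ + C)(a − b). -/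

import Mathlib

open Matrix

/-- Key inequality of the nonergodic rate analysis of neADMM: from the variational
characterizations of two consecutive predictor iterates `w̃ᵏ, w̃^{k+1}` and the
skew-orthogonality of `J`, with `a = wᵏ − w̃ᵏ`, `b = w^{k+1} − w̃^{k+1}` and
`w^{k+1} = wᵏ − E(wᵏ − w̃ᵏ)`, one has `aᵀEᵀDE(a − b) ≥ ½(a − b)ᵀ(Cᵀ + C)(a − b)`. -/
theorem neADMM_nonergodic_key_inequality {n : ℕ}
    (D E : Matrix (Fin n) (Fin n) ℝ) (hD : D.IsSymm)
    (C : Matrix (Fin n) (Fin n) ℝ) (hC : C = D * E)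
    (H : (Fin n → ℝ) → ℝ) (J : (Fin n → ℝ) → (Fin n → ℝ))
    (hskew : ∀ w₁ w₂ : Fin n → ℝ, (w₁ - w₂) ⬝ᵥ (J w₁ - J w₂) = 0)
    (wk wtk wtk1 : Fin n → ℝ) (wk1 : Fin n → ℝ) (hwk1 : wk1 = wk - E *ᵥ (wk - wtk))
    (h1 : ∀ w : Fin n → ℝ, 0 ≤ H w - H wtk + (w - wtk) ⬝ᵥ (J wtk - C *ᵥ (wk - wtk)))
    (h2 : ∀ w : Fin n → ℝ,
      0 ≤ H w - H wtk1 + (w - wtk1) ⬝ᵥ (J wtk1 - C *ᵥ (wk1 - wtk1))) :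
    (1 / 2) * (((wk - wtk) - (wk1 - wtk1)) ⬝ᵥ
        ((Cᵀ + C) *ᵥ ((wk - wtk) - (wk1 - wtk1)))) ≤
      (wk - wtk) ⬝ᵥ ((Eᵀ * D * E) *ᵥ ((wk - wtk) - (wk1 - wtk1))) := by
  set a := wk - wtk with ha
  set b := wk1 - wtk1 with hb
  -- sum the two variational inequalities
  have hA := h1 wtk1
  have hB := h2 wtk
  have hs := hskew wtk1 wtk
  -- key inequality : (wtk1 - wtk) ⬝ C(a - b) ≤ 0
  have key : (wtk1 - wtk) ⬝ᵥ (C *ᵥ (a - b)) ≤ 0 := by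
    have expand : (wtk1 - wtk) ⬝ᵥ (C *ᵥ (a - b))
        = -(((wtk1 - wtk) ⬝ᵥ (J wtk - C *ᵥ a)) + ((wtk - wtk1) ⬝ᵥ (J wtk1 - C *ᵥ b))
            - (wtk1 - wtk) ⬝ᵥ (J wtk - J wtk1)) := by
      simp only [dotProduct_sub, Matrix.mulVec_sub, sub_dotProduct, dotProduct_neg]
      ring
    have hsk2 : (wtk1 - wtk) ⬝ᵥ (J wtk - J wtk1) = 0 := by
      have := hskew wtk1 wtk
      have h' : (wtk1 - wtk) ⬝ᵥ (J wtk - J wtk1) = -((wtk1 - wtk) ⬝ᵥ (J wtk1 - J wtk)) := by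
        rw [show J wtk - J wtk1 = -(J wtk1 - J wtk) by ring, dotProduct_neg]
      rw [h', this, neg_zero]
    rw [expand, hsk2]
    nlinarith [hA, hB]
  -- wtk1 - wtk = (a - b) - E *ᵥ a
  have hdiff : wtk1 - wtk = (a - b) - E *ᵥ a := by
    rw [hb, hwk1, ha]; ring_nf
  rw [hdiff] at key
  have key2 : (a - b) ⬝ᵥ (C *ᵥ (a - b)) ≤ (E *ᵥ a) ⬝ᵥ (C *ᵥ (a - b)) := by
    have := key
    rw [sub_dotProduct] at this
    linarith
  -- rewrite goal
  have hL : a ⬝ᵥ ((Eᵀ * D * E) *ᵥ (a - b)) = (E *ᵥ a) ⬝ᵥ (C *ᵥ (a - b)) := by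
    rw [hC, Matrix.dotProduct_mulVec, Matrix.dotProduct_mulVec, Matrix.mul_assoc,
      ← Matrix.vecMul_vecMul, Matrix.vecMul_transpose]
  have hR : (a - b) ⬝ᵥ ((Cᵀ + C) *ᵥ (a - b)) = 2 * ((a - b) ⬝ᵥ (C *ᵥ (a - b))) := by
    rw [Matrix.add_mulVec, dotProduct_add]
    have : (a - b) ⬝ᵥ (Cᵀ *ᵥ (a - b)) = (a - b) ⬝ᵥ (C *ᵥ (a - b)) := by
      rw [Matrix.dotProduct_mulVec, Matrix.vecMul_transpose, dotProduct_comm]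
    rw [this]; ring
  rw [hL, hR]
  linarith
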